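/- There exists a function R: (0,π) → ℝ, independent of ε, such that for every ε with 0 ≤ ε < 1 and every (θ,φ) with 0 < θ < π, φ ∈ ℝ, the function h_ε(θ,φ) = (3cos²θ - 1) + ε²·[(-9/980)·(35cos⁴θ - 30cos²θ + 3) + 2/5] satisfies Δ₁ h_ε = (-6 + (12/7)ε²)·h_ε + ε⁴·R(θ). In other words, to first order in ε² the perturbed spherical harmonic with l = 2, m = 0 is an eigenfunction of Δ₁ with eigenvalue -6 + (12/7)ε². -/

import Mathlib

open Real

/-- The truncated (first order in `ε²`) Finslerian Laplace operator, acting on a function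
`u : ℝ → ℝ → ℝ` of the angular variables `(θ, φ)`. -/
noncomputable def truncLaplacian (ε : ℝ) (u : ℝ → ℝ → ℝ) (θ φ : ℝ) : ℝ :=
  ((4 - 5 * ε ^ 2 * sin θ ^ 2) / (4 * sin θ ^ 2)) * deriv (deriv (u θ)) φ
  + (1 - 3 / 4 * ε ^ 2 * sin θ ^ 2) * deriv (deriv (fun t => u t φ)) θ
  + (cos θ / sin θ) * (1 + 3 / 4 * ε ^ 2 * sin θ ^ 2) * deriv (fun t => u t φ) θ

private lemma hdA (ε t : ℝ) :
    HasDerivAt (fun t' => (3 * Real.cos t' ^ 2 - 1) +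
        ε ^ 2 * ((-9 / 980) * (35 * Real.cos t' ^ 4 - 30 * Real.cos t' ^ 2 + 3) + 2 / 5))
      (Real.sin t * (-6 * Real.cos t +
        ε ^ 2 * ((-9 / 980) * (-140 * Real.cos t ^ 3 + 60 * Real.cos t)))) t := by
  have h1 := (Real.hasDerivAt_cos t).pow 2
  have h2 := (Real.hasDerivAt_cos t).pow 4
  have := (((h1.const_mul (3:ℝ)).sub_const 1).add
    ((((h2.const_mul (35:ℝ)).sub (h1.const_mul (30:ℝ))).add_const 3).const_mul
      ((-9:ℝ)/980) |>.add_const (2/5) |>.const_mul (ε^2)))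
  refine HasDerivAt.congr_deriv this ?_
  ring

private lemma hdB (ε t : ℝ) :
    HasDerivAt (fun t' => Real.sin t' * (-6 * Real.cos t' +
        ε ^ 2 * ((-9 / 980) * (-140 * Real.cos t' ^ 3 + 60 * Real.cos t'))))
      (Real.cos t * (-6 * Real.cos t +
          ε ^ 2 * ((-9 / 980) * (-140 * Real.cos t ^ 3 + 60 * Real.cos t)))
        - Real.sin t ^ 2 * (-6 + ε ^ 2 * ((-9 / 980) * (-420 * Real.cos t ^ 2 + 60)))) t := by
  have h1 := Real.hasDerivAt_cos t
  have h3 := (Real.hasDerivAt_cos t).pow 3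
  have hG := ((h1.const_mul (-6:ℝ)).add
    (((h3.const_mul (-140:ℝ)).add (h1.const_mul (60:ℝ))).const_mul ((-9:ℝ)/980)
      |>.const_mul (ε^2)))
  have := (Real.hasDerivAt_sin t).mul hG
  refine HasDerivAt.congr_deriv this ?_
  simp only [Pi.add_apply, Pi.pow_apply]
  ring

/-- To first order in `ε²`, the perturbed spherical harmonic with `l = 2`, `m = 0`,
`h_ε(θ,φ) = (3cos²θ - 1) + ε²·[(-9/980)·(35cos⁴θ - 30cos²θ + 3) + 2/5]`, is an eigenfunction
of `Δ₁` with eigenvalue `-6 + (12/7)ε²`: there is an `ε`-independent remainder `R(θ)` with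
`Δ₁ h_ε = (-6 + (12/7)ε²)·h_ε + ε⁴·R(θ)`. -/
theorem truncLaplacian_l2m0_eigen :
    ∃ R : ℝ → ℝ, ∀ ε : ℝ, 0 ≤ ε → ε < 1 →
      ∀ θ φ : ℝ, 0 < θ → θ < Real.pi →
        truncLaplacian ε
            (fun θ' _ => (3 * Real.cos θ' ^ 2 - 1) +
              ε ^ 2 * ((-9 / 980) * (35 * Real.cos θ' ^ 4 - 30 * Real.cos θ' ^ 2 + 3) + 2 / 5))
            θ φ =
          (-6 + 12 / 7 * ε ^ 2) *
            ((3 * Real.cos θ ^ 2 - 1) +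
              ε ^ 2 * ((-9 / 980) * (35 * Real.cos θ ^ 4 - 30 * Real.cos θ ^ 2 + 3) + 2 / 5))
          + ε ^ 4 * R θ := by
  refine ⟨fun θ => 81/28 * Real.cos θ ^ 6 - 1107/196 * Real.cos θ ^ 4
      + 4455/1372 * Real.cos θ ^ 2 - 1443/1372, fun ε _ _ θ φ hθ0 hθπ => ?_⟩
  have hs : Real.sin θ ≠ 0 := ne_of_gt (Real.sin_pos_of_pos_of_lt_pi hθ0 hθπ)
  unfold truncLaplacian
  have hφ : deriv (deriv (fun _ : ℝ => (3 * Real.cos θ ^ 2 - 1) +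
      ε ^ 2 * ((-9 / 980) * (35 * Real.cos θ ^ 4 - 30 * Real.cos θ ^ 2 + 3) + 2 / 5))) φ = 0 := by
    simp
  have hd1 : deriv (fun t => (3 * Real.cos t ^ 2 - 1) +
      ε ^ 2 * ((-9 / 980) * (35 * Real.cos t ^ 4 - 30 * Real.cos t ^ 2 + 3) + 2 / 5))
      = fun t => Real.sin t * (-6 * Real.cos t +
        ε ^ 2 * ((-9 / 980) * (-140 * Real.cos t ^ 3 + 60 * Real.cos t))) :=
    funext fun t => (hdA ε t).deriv
  rw [hφ, hd1, (hdB ε θ).deriv]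
  have hsq : Real.sin θ ^ 2 = 1 - Real.cos θ ^ 2 := Real.sin_sq θ
  rw [hsq]
  have hkey : ∀ a b : ℝ, Real.cos θ / Real.sin θ * a * (Real.sin θ * b)
      = Real.cos θ * a * b := by
    intro a b; field_simp
  rw [hkey]
  ring
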